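/- Let X be a real random variable with A(θ) = log E[exp(θX)] finite for all θ ≤ 0, with ess inf X = L > -∞ and P(X = L) > 0. Then limsup_{l↓L} A*(l) ≤ -log P(X = L) < ∞, where A* is the convex conjugate of A; consequently A*(A'(θ)) stays bounded as θ → -∞. -/

import Mathlib

open MeasureTheory

/-- Let `X ≥ L` a.s. with an atom at the left endpoint `L` (`P(X = L) > 0`) and with
cumulant generating function `A θ = log E[exp (θ X)]` finite for all `θ ≤ 0`.
Then the Cramér rate function `A* l = sup_{θ ≤ 0} (θ l - A θ)` satisfies
`limsup_{l ↓ L} A*(l) ≤ - log P(X = L)` (in particular it stays bounded above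
near `L`, so `A*(A'(θ))` stays bounded as `θ → -∞`). -/
theorem limsup_rateFn_le_of_atom
    {Ω : Type*} [MeasurableSpace Ω] (μ : Measure Ω) [IsProbabilityMeasure μ]
    (X : Ω → ℝ) (hX : Measurable X) (L : ℝ)
    (hbound : ∀ᵐ ω ∂μ, L ≤ X ω)
    (hatom : 0 < (μ {ω | X ω = L}).toReal)
    (hint : ∀ θ : ℝ, θ ≤ 0 → Integrable (fun ω => Real.exp (θ * X ω)) μ)
    (A : ℝ → ℝ) (hA : ∀ θ, A θ = Real.log (∫ ω, Real.exp (θ * X ω) ∂μ))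
    (Astar : ℝ → ℝ)
    (hAstar : ∀ l, Astar l = sSup {y | ∃ θ ≤ (0 : ℝ), y = θ * l - A θ}) :
    Filter.limsup Astar (nhdsWithin L (Set.Ioi L))
        ≤ - Real.log (μ {ω | X ω = L}).toReal ∧
      ∃ l₀ > L, BddAbove (Astar '' Set.Ioo L l₀) := by
  classical
  set p : ℝ := (μ {ω | X ω = L}).toReal with hp
  have hs : MeasurableSet {ω | X ω = L} := hX (measurableSet_singleton L)
  -- lower bound on A
  have hA0 : ∀ θ : ℝ, θ ≤ 0 → θ * L + Real.log p ≤ A θ := by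
    intro θ hθ
    have hind : ∫ ω, ({ω | X ω = L}).indicator (fun _ => Real.exp (θ * L)) ω ∂μ
        = Real.exp (θ * L) * p := by
      rw [MeasureTheory.integral_indicator hs, MeasureTheory.setIntegral_const,
        smul_eq_mul, mul_comm]
      rfl
    have hmono : ∀ ω, ({ω | X ω = L}).indicator (fun _ => Real.exp (θ * L)) ω
        ≤ Real.exp (θ * X ω) := by
      intro ω
      by_cases h : ω ∈ {ω | X ω = L}
      · rw [Set.indicator_of_mem h]
        have : X ω = L := h
        rw [this]
      · rw [Set.indicator_of_notMem h]
        positivity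
    have hle : Real.exp (θ * L) * p ≤ ∫ ω, Real.exp (θ * X ω) ∂μ := by
      rw [← hind]
      exact MeasureTheory.integral_mono
        ((integrable_const _).indicator hs) (hint θ hθ) hmono
    have hpos : 0 < Real.exp (θ * L) * p := by positivity
    rw [hA θ]
    calc θ * L + Real.log p = Real.log (Real.exp (θ * L) * p) := by
          rw [Real.log_mul (Real.exp_ne_zero _) (ne_of_gt hatom), Real.log_exp]
      _ ≤ Real.log (∫ ω, Real.exp (θ * X ω) ∂μ) := Real.log_le_log hpos hle
  -- bound on Astar
  have hAs : ∀ l : ℝ, L ≤ l → Astar l ≤ - Real.log p := by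
    intro l hl
    rw [hAstar l]
    have hne : Set.Nonempty {y | ∃ θ ≤ (0:ℝ), y = θ * l - A θ} :=
      ⟨0 * l - A 0, 0, le_refl 0, rfl⟩
    apply csSup_le hne
    rintro y ⟨θ, hθ, rfl⟩
    have h1 := hA0 θ hθ
    have h2 : θ * l ≤ θ * L := mul_le_mul_of_nonpos_left hl hθ
    linarith
  have hbdd : BddAbove (Astar '' Set.Ioo L (L + 1)) := by
    refine ⟨- Real.log p, ?_⟩
    rintro y ⟨l, hl, rfl⟩
    exact hAs l hl.1.le
  refine ⟨?_, L + 1, by linarith, hbdd⟩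
  have hev : ∀ᶠ l in nhdsWithin L (Set.Ioi L), Astar l ≤ - Real.log p :=
    eventually_mem_nhdsWithin.mono (fun l hl => hAs l (le_of_lt hl))
  have hlow : ∀ᶠ l in nhdsWithin L (Set.Ioi L), (0 * L - A 0) ≤ Astar l := by
    refine eventually_mem_nhdsWithin.mono (fun l hl => ?_)
    rw [hAstar l]
    have hb : BddAbove {y | ∃ θ ≤ (0:ℝ), y = θ * l - A θ} := by
      refine ⟨- Real.log p, ?_⟩
      rintro y ⟨θ, hθ, rfl⟩
      have h1 := hA0 θ hθ
      have h2 : θ * l ≤ θ * L := mul_le_mul_of_nonpos_left (le_of_lt hl) hθ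
      linarith
    have hmem : (0 * l - A 0) ∈ {y | ∃ θ ≤ (0:ℝ), y = θ * l - A θ} :=
      ⟨0, le_refl 0, rfl⟩
    calc 0 * L - A 0 = 0 * l - A 0 := by ring
      _ ≤ _ := le_csSup hb hmem
  have hcob : Filter.IsCoboundedUnder (· ≤ ·) (nhdsWithin L (Set.Ioi L)) Astar :=
    Filter.isCoboundedUnder_le_of_eventually_le _ hlow
  exact Filter.limsup_le_of_le hcob hev
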